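/- Let F be a field, V a nonsingular k×k matrix over F with columns v_1,…,v_k, P a nonsingular k×k matrix over F with entries p_{ij}, U = V·P with columns u_1,…,u_k, and V̂ = (Vᵗ)⁻¹. Let X be any k×k matrix over F with columns x_1,…,x_k, let δ, ε ∈ F, and set Y = δ V̂ Xᵗ U + ε X P with columns y_1,…,y_k. Then for any a, j ∈ {1,…,k}: v_aᵗ y_j − ε ∑_{i ∈ {1,…,k}∖{a}} p_{ij} (v_aᵗ x_i) = (δ u_j + ε p_{aj} v_a)ᵗ x_a. -/
import Mathlib


open Matrix Finset

/-- For all `a, j`: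
`v_aᵗ y_j − ε ∑_{i≠a} p_{ij}(v_aᵗ x_i) = (δ u_j + ε p_{aj} v_a)ᵗ x_a`. -/
theorem newcomer_computed_scalar_identity
    {F : Type*} [Field F] {k : ℕ}
    (V P : Matrix (Fin k) (Fin k) F)
    (hV : IsUnit V.det) (hP : IsUnit P.det)
    (X : Matrix (Fin k) (Fin k) F) (δ ε : F) :
    ∀ a j : Fin k,
      ((fun idx => V idx a) ⬝ᵥ
          (fun idx => (δ • ((Vᵀ)⁻¹ * Xᵀ * (V * P)) + ε • (X * P)) idx j)) -
        ε * (∑ i ∈ univ.erase a, P i j *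
          ((fun idx => V idx a) ⬝ᵥ (fun idx => X idx i))) =
      (fun idx => δ * (V * P) idx j + ε * P a j * V idx a) ⬝ᵥ
        (fun idx => X idx a) := by
  intro a j
  have hVt : Vᵀ * (Vᵀ)⁻¹ = 1 := mul_nonsing_inv _ (by simpa using hV)
  have key : ∑ idx, V idx a * ((Vᵀ)⁻¹ * Xᵀ * (V * P)) idx j
      = ∑ m, X m a * (V * P) m j := by
    have h1 : Vᵀ * ((Vᵀ)⁻¹ * Xᵀ * (V * P)) = Xᵀ * (V * P) := by
      rw [show (Vᵀ)⁻¹ * Xᵀ * (V * P) = (Vᵀ)⁻¹ * (Xᵀ * (V * P)) from mul_assoc _ _ _,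
        ← mul_assoc, hVt, one_mul]
    have := congrFun (congrFun h1 a) j
    simpa [Matrix.mul_apply, Matrix.transpose_apply] using this
  have hsum : ∑ idx, V idx a * (X * P) idx j
      = ∑ i, P i j * (∑ idx, V idx a * X idx i) := by
    simp only [Matrix.mul_apply, Finset.mul_sum, Finset.sum_mul]
    rw [Finset.sum_comm]
    congr 1; ext i; congr 1; ext idx; ring
  have hsplit : ∑ i, P i j * (∑ idx, V idx a * X idx i)
      = P a j * (∑ idx, V idx a * X idx a)
        + ∑ i ∈ univ.erase a, P i j * (∑ idx, V idx a * X idx i) :=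
    (Finset.add_sum_erase _ _ (Finset.mem_univ a)).symm
  simp only [dotProduct, Matrix.add_apply, Matrix.smul_apply, smul_eq_mul]
  simp only [mul_add, Finset.sum_add_distrib]
  rw [show (∑ idx, V idx a * (δ * ((Vᵀ)⁻¹ * Xᵀ * (V * P)) idx j))
      = δ * ∑ idx, V idx a * ((Vᵀ)⁻¹ * Xᵀ * (V * P)) idx j by
    rw [Finset.mul_sum]; congr 1; ext idx; ring]
  rw [show (∑ idx, V idx a * (ε * (X * P) idx j))
      = ε * ∑ idx, V idx a * (X * P) idx j by
    rw [Finset.mul_sum]; congr 1; ext idx; ring]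
  rw [key, hsum, hsplit]
  rw [show (∑ m, (δ * (V * P) m j + ε * P a j * V m a) * X m a)
      = δ * (∑ m, X m a * (V * P) m j) + ε * (P a j * ∑ m, V m a * X m a) by
    simp only [add_mul, Finset.sum_add_distrib, Finset.mul_sum]
    congr 1
    · congr 1; ext m; ring
    · congr 1; ext m; ring]
  ring
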